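/- For ℓ ≥ 3/2 half-integer and d = p+q with 3 ≤ d ≤ 2ℓ+2, the number of functionally independent Casimir invariants of the unextended algebra Ḡal_ℓ(p,q), computed as dim g − max rank of the matrix of structure forms, equals (4ℓd + 3d − d² − 6)/2. -/

import Mathlib

open Matrix Module
set_option maxHeartbeats 2000000
set_option synthInstance.maxHeartbeats 400000

section Aux
variable {α β : Type*} [Fintype α] [Fintype β]

/-- extension by zero on the left summand -/
noncomputable def extL : (α → ℝ) →ₗ[ℝ] (α ⊕ β → ℝ) where
  toFun u := Sum.elim u 0
  map_add' u v := by funext i; cases i <;> simp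
  map_smul' c u := by funext i; cases i <;> simp

noncomputable def extR : (β → ℝ) →ₗ[ℝ] (α ⊕ β → ℝ) where
  toFun u := Sum.elim 0 u
  map_add' u v := by funext i; cases i <;> simp
  map_smul' c u := by funext i; cases i <;> simp

lemma rank_fromBlocks_ge (A : Matrix α α ℝ) (B : Matrix α β ℝ) (C : Matrix β α ℝ) :
    B.rank + C.rank ≤ (Matrix.fromBlocks A B C 0).rank := by
  classical
  set M := Matrix.fromBlocks A B C (0 : Matrix β β ℝ) with hM
  set f := M.mulVecLin with hf
  set W := LinearMap.range f with hW
  set π : (α ⊕ β → ℝ) →ₗ[ℝ] (β → ℝ) := LinearMap.funLeft ℝ ℝ Sum.inr with hπ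
  have key1 : π ∘ₗ (f ∘ₗ (extL : (α → ℝ) →ₗ[ℝ] (α ⊕ β → ℝ))) = C.mulVecLin := by
    apply LinearMap.ext; intro u
    funext v
    simp only [LinearMap.comp_apply, hπ, hf, hM, LinearMap.funLeft_apply,
      Matrix.mulVecLin_apply]
    show (Matrix.fromBlocks A B C 0 *ᵥ (Sum.elim u 0)) (Sum.inr v) = _
    rw [Matrix.fromBlocks_mulVec]
    simp
  have key2 : f ∘ₗ (extR : (β → ℝ) →ₗ[ℝ] (α ⊕ β → ℝ))
      = (extL : (α → ℝ) →ₗ[ℝ] (α ⊕ β → ℝ)) ∘ₗ B.mulVecLin := by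
    apply LinearMap.ext; intro w
    funext i
    simp only [LinearMap.comp_apply, hf, hM, Matrix.mulVecLin_apply]
    show (Matrix.fromBlocks A B C 0 *ᵥ (Sum.elim 0 w)) i = Sum.elim (B *ᵥ w) 0 i
    rw [Matrix.fromBlocks_mulVec]
    cases i <;> simp
  have hrn := LinearMap.finrank_range_add_finrank_ker (π.domRestrict W)
  have hWfin : finrank ℝ W = M.rank := rfl
  have hrange : C.rank ≤ finrank ℝ (LinearMap.range (π.domRestrict W)) := by
    rw [LinearMap.range_domRestrict]
    have h1 : LinearMap.range C.mulVecLin ≤ W.map π := by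
      rw [← key1]
      rw [LinearMap.range_comp]
      exact Submodule.map_mono (LinearMap.range_comp_le_range _ _)
    exact Submodule.finrank_mono h1
  have hker : B.rank ≤ finrank ℝ (LinearMap.ker (π.domRestrict W)) := by
    set K := LinearMap.range (f ∘ₗ (extR : (β → ℝ) →ₗ[ℝ] (α ⊕ β → ℝ))) with hK
    have hKW : K ≤ W := LinearMap.range_comp_le_range _ _
    have hKker : K ≤ LinearMap.ker π := by
      intro y hy
      obtain ⟨w, rfl⟩ := hy
      rw [LinearMap.mem_ker]
      have h2 : (f ∘ₗ extR) w = extL (B.mulVecLin w) := by rw [key2]; rfl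
      rw [h2]
      funext v
      simp [hπ, extL]
    have hKrank : B.rank ≤ finrank ℝ K := by
      rw [hK, key2, LinearMap.range_comp]
      have hinj : Function.Injective (extL : (α → ℝ) →ₗ[ℝ] (α ⊕ β → ℝ)) := by
        intro u v h
        funext i
        have := congrFun h (Sum.inl i)
        simpa [extL] using this
      rw [(Submodule.equivMapOfInjective _ hinj _).finrank_eq.symm]
      exact le_rfl
    have : finrank ℝ K ≤ finrank ℝ (LinearMap.ker (π.domRestrict W)) := by
      rw [LinearMap.ker_domRestrict]
      calc finrank ℝ K = finrank ℝ (Submodule.comap W.subtype K) :=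
            ((Submodule.comapSubtypeEquivOfLe hKW).finrank_eq).symm
        _ ≤ _ := Submodule.finrank_mono (Submodule.comap_mono hKker)
    exact hKrank.trans this
  calc B.rank + C.rank ≤ finrank ℝ (LinearMap.ker (π.domRestrict W))
        + finrank ℝ (LinearMap.range (π.domRestrict W)) := add_le_add hker hrange
    _ = finrank ℝ W := by rw [add_comm]; exact hrn
    _ = M.rank := hWfin

end Aux

section Aux2
variable {m n o : Type*} [Fintype m] [Fintype n] [Fintype o]

lemma rank_le_of_col_support (A : Matrix m n ℝ) (g : o → n) (hg : Function.Injective g)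
    (h : ∀ i j, j ∉ Set.range g → A i j = 0) : A.rank ≤ Fintype.card o := by
  classical
  have hsub : LinearMap.range A.mulVecLin ≤ LinearMap.range (A.submatrix id g).mulVecLin := by
    rintro y ⟨v, rfl⟩
    refine ⟨v ∘ g, ?_⟩
    funext i
    simp only [Matrix.mulVecLin_apply, Matrix.mulVec, dotProduct, Matrix.submatrix_apply,
      id_eq, Function.comp_apply]
    have himg : ∑ j ∈ Finset.univ.image g, A i j * v j = ∑ x : o, A i (g x) * v (g x) :=
      Finset.sum_image (fun a _ b _ hab => hg hab)
    rw [← himg]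
    apply Finset.sum_subset (Finset.subset_univ _)
    intro j _ hj
    have : j ∉ Set.range g := by
      intro ⟨u, hu⟩
      exact hj (Finset.mem_image.mpr ⟨u, Finset.mem_univ _, hu⟩)
    rw [h i j this, zero_mul]
  calc A.rank ≤ (A.submatrix id g).rank := Submodule.finrank_mono hsub
    _ ≤ Fintype.card o := Matrix.rank_le_card_width _

lemma rank_le_of_row_support (A : Matrix m n ℝ) (g : o → m) (hg : Function.Injective g)
    (h : ∀ i j, i ∉ Set.range g → A i j = 0) : A.rank ≤ Fintype.card o := by
  rw [← Matrix.rank_transpose]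
  exact rank_le_of_col_support Aᵀ g hg (fun i j hj => h j i hj)

lemma matrix_rank_add_le (A B : Matrix m n ℝ) : (A + B).rank ≤ A.rank + B.rank := by
  classical
  have : LinearMap.range (A + B).mulVecLin ≤
      LinearMap.range A.mulVecLin ⊔ LinearMap.range B.mulVecLin := by
    rintro y ⟨v, rfl⟩
    rw [Matrix.mulVecLin_apply, Matrix.add_mulVec]
    exact Submodule.add_mem_sup ⟨v, rfl⟩ ⟨v, rfl⟩
  calc (A + B).rank ≤ finrank ℝ ↥(LinearMap.range A.mulVecLin ⊔ LinearMap.range B.mulVecLin) :=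
        Submodule.finrank_mono this
    _ ≤ A.rank + B.rank := by
        exact Submodule.finrank_add_le_finrank_add_finrank
          (LinearMap.range A.mulVecLin) (LinearMap.range B.mulVecLin)

lemma rank_eq_card_of_inj (A : Matrix m n ℝ) (h : Function.Injective A.mulVecLin) :
    A.rank = Fintype.card n := by
  rw [Matrix.rank, LinearMap.finrank_range_of_inj h, Module.finrank_fintype_fun_eq_card]

lemma rank_neg (A : Matrix m n ℝ) : (-A).rank = A.rank := by
  classical
  have hr : LinearMap.range (-A).mulVecLin = LinearMap.range A.mulVecLin := by
    apply le_antisymm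
    · rintro y ⟨v, rfl⟩
      exact ⟨-v, by simp [Matrix.mulVecLin_apply, Matrix.neg_mulVec, Matrix.mulVec_neg]⟩
    · rintro y ⟨v, rfl⟩
      exact ⟨-v, by simp [Matrix.mulVecLin_apply, Matrix.neg_mulVec, Matrix.mulVec_neg]⟩
  rw [Matrix.rank, Matrix.rank, hr]
end Aux2

lemma cardE_eq (d : ℕ) :
    2 * Fintype.card {pr : Fin d × Fin d // pr.1 < pr.2} = d * (d - 1) := by
  have e : {pr : Fin d × Fin d // pr.1 < pr.2} ≃ (Σ j : Fin d, Fin j.val) :=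
    { toFun := fun x => ⟨x.1.2, ⟨x.1.1.val, x.2⟩⟩
      invFun := fun x => ⟨(⟨x.2.val, lt_trans x.2.isLt x.1.isLt⟩, x.1), x.2.isLt⟩
      left_inv := by rintro ⟨⟨i, j⟩, h⟩; rfl
      right_inv := by rintro ⟨j, i⟩; rfl }
  rw [Fintype.card_congr e, Fintype.card_sigma]
  simp only [Fintype.card_fin]
  rw [Fin.sum_univ_eq_sum_range (fun i => i) d, mul_comm]
  exact Finset.sum_range_id_mul_two d



/-- Index type for a basis of the unextended algebra `Ḡal_ℓ(p,q)` (`ℓ = t + 1/2`,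
`d = p + q`): `H, D, C`, the `E_{ij}` (`i < j`) and the `P_{n,i}` (`0 ≤ n ≤ 2ℓ`). -/
abbrev GalbIdx (d t : ℕ) : Type :=
  Fin 3 ⊕ ({pr : Fin d × Fin d // pr.1 < pr.2} ⊕ (Fin (2 * t + 2) × Fin d))

/-- For half-integer `ℓ = t + 1/2 ≥ 3/2` and `3 ≤ d = p + q ≤ 2ℓ + 2`,
the number of functionally independent Casimir invariants of `Ḡal_ℓ(p,q)`, computed as
`dim g − max_x rank (C_{ij}^k x_k)` for the matrix of structure forms relative to a basis,
equals `(4ℓd + 3d − d² − 6)/2`. -/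
theorem stmt11 (d t p q : ℕ) (ht : 1 ≤ t) (hd : 3 ≤ d) (hdu : d ≤ 2 * t + 3)
    (hpq : p + q = d)
    (L : Type) [LieRing L] [LieAlgebra ℝ L] [Module.Finite ℝ L]
    (b : Basis (GalbIdx d t) ℝ L)
    (XH XD XC : L) (XE : Fin d → Fin d → L) (XP : ℕ → Fin d → L)
    (gm : Fin d → ℝ) (hgm : ∀ i, gm i = if (i : ℕ) < p then 1 else -1)
    (hXH : XH = b (Sum.inl 0)) (hXD : XD = b (Sum.inl 1)) (hXC : XC = b (Sum.inl 2))
    (hXE : ∀ (i j : Fin d) (h : i < j), XE i j = b (Sum.inr (Sum.inl ⟨(i, j), h⟩)))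
    (hEanti : ∀ i j, XE i j = - XE j i)
    (hXP : ∀ (n : Fin (2 * t + 2)) (i : Fin d), XP n i = b (Sum.inr (Sum.inr (n, i))))
    (hXP0 : ∀ n, 2 * t + 1 < n → ∀ i, XP n i = 0)
    (hDH : ⁅XD, XH⁆ = (2 : ℝ) • XH) (hDC : ⁅XD, XC⁆ = (-2 : ℝ) • XC)
    (hCH : ⁅XC, XH⁆ = XD)
    (hsl2so : ∀ i j : Fin d, ⁅XH, XE i j⁆ = 0 ∧ ⁅XD, XE i j⁆ = 0 ∧ ⁅XC, XE i j⁆ = 0)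
    (hH : ∀ n ≤ 2 * t + 1, ∀ i, ⁅XH, XP n i⁆ = (-(n : ℝ)) • XP (n - 1) i)
    (hD : ∀ n ≤ 2 * t + 1, ∀ i, ⁅XD, XP n i⁆ = ((2 * t + 1 : ℝ) - 2 * n) • XP n i)
    (hC : ∀ n ≤ 2 * t + 1, ∀ i, ⁅XC, XP n i⁆ = ((2 * t + 1 : ℝ) - n) • XP (n + 1) i)
    (hEP : ∀ (i j : Fin d) (n : ℕ), n ≤ 2 * t + 1 → ∀ k,
      ⁅XE i j, XP n k⁆ = (if k = i then gm i else 0) • XP n j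
        - (if k = j then gm j else 0) • XP n i)
    (hEE : ∀ i j k l : Fin d,
      ⁅XE i j, XE k l⁆ = (if i = k then gm i else 0) • XE j l
        + (if j = l then gm j else 0) • XE i k
        - (if i = l then gm i else 0) • XE j k
        - (if j = k then gm j else 0) • XE i l)
    (hPP : ∀ m ≤ 2 * t + 1, ∀ n ≤ 2 * t + 1, ∀ i j, ⁅XP m i, XP n j⁆ = 0) :
    ((Module.finrank ℝ L : ℚ)
        - (sSup {r : ℕ | ∃ x : GalbIdx d t → ℝ,
            (Matrix.of fun i j : GalbIdx d t =>
              ∑ k, b.repr ⁅b i, b j⁆ k * x k).rank = r} : ℕ))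
      = (4 * ((t : ℚ) + 1/2) * d + 3 * d - d ^ 2 - 6) / 2 := by
  classical
  -- notation
  set cE := Fintype.card {pr : Fin d × Fin d // pr.1 < pr.2} with hcE
  set Mx : ((GalbIdx d t) → ℝ) → Matrix (GalbIdx d t) (GalbIdx d t) ℝ :=
    fun x => Matrix.of fun i j : GalbIdx d t => ∑ k, b.repr ⁅b i, b j⁆ k * x k with hMxdef
  set φ : ((GalbIdx d t) → ℝ) → (L →ₗ[ℝ] ℝ) :=
    fun x => ∑ m : GalbIdx d t, x m • b.coord m with hφdef
  have hφb : ∀ (x : (GalbIdx d t) → ℝ) (m : GalbIdx d t), φ x (b m) = x m := by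
    intro x m
    rw [hφdef]
    simp only [LinearMap.coe_sum, Finset.sum_apply, LinearMap.smul_apply,
      Module.Basis.coord_apply, Module.Basis.repr_self, smul_eq_mul]
    rw [Finset.sum_eq_single m]
    · simp
    · intro m' _ hm'
      rw [Finsupp.single_eq_of_ne' (Ne.symm hm'), mul_zero]
    · intro h; exact absurd (Finset.mem_univ m) h
  have hMx : ∀ (x : (GalbIdx d t) → ℝ) (i j : GalbIdx d t), Mx x i j = φ x ⁅b i, b j⁆ := by
    intro x i j
    rw [hMxdef, hφdef]
    simp only [Matrix.of_apply, LinearMap.coe_sum, Finset.sum_apply, LinearMap.smul_apply,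
      Module.Basis.coord_apply, smul_eq_mul]
    exact Finset.sum_congr rfl (fun k _ => mul_comm _ _)
  -- the V × V block always vanishes
  have hPPb : ∀ (x : (GalbIdx d t) → ℝ) (v w : Fin (2 * t + 2) × Fin d),
      Mx x (Sum.inr (Sum.inr v)) (Sum.inr (Sum.inr w)) = 0 := by
    rintro x ⟨n, i⟩ ⟨m, j⟩
    rw [hMx, ← hXP n i, ← hXP m j,
      hPP _ (by omega : (n : ℕ) ≤ 2 * t + 1) _ (by omega : (m : ℕ) ≤ 2 * t + 1), map_zero]
  -- upper bound
  have hub : ∀ x : (GalbIdx d t) → ℝ, (Mx x).rank ≤ 2 * (3 + cE) := by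
    intro x
    set M1 : Matrix (GalbIdx d t) (GalbIdx d t) ℝ := Matrix.of fun i j =>
      match i with
      | Sum.inl _ => Mx x i j
      | Sum.inr (Sum.inl _) => Mx x i j
      | Sum.inr (Sum.inr _) => 0 with hM1
    set M2 : Matrix (GalbIdx d t) (GalbIdx d t) ℝ := Matrix.of fun i j =>
      match i with
      | Sum.inl _ => 0
      | Sum.inr (Sum.inl _) => 0
      | Sum.inr (Sum.inr _) => Mx x i j with hM2
    have hsplit : Mx x = M1 + M2 := by
      ext i j
      rcases i with a | e | v <;>
        simp [hM1, hM2, Matrix.add_apply]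
    have hcard : Fintype.card (Fin 3 ⊕ {pr : Fin d × Fin d // pr.1 < pr.2}) = 3 + cE := by
      simp [hcE]
    have hginj : Function.Injective
        (Sum.map id Sum.inl : Fin 3 ⊕ {pr : Fin d × Fin d // pr.1 < pr.2} → GalbIdx d t) :=
      Sum.map_injective.mpr ⟨Function.injective_id, Sum.inl_injective⟩
    have h1 : M1.rank ≤ 3 + cE := by
      rw [← hcard]
      apply rank_le_of_row_support M1 (Sum.map id Sum.inl) hginj
      intro i j hi
      rcases i with a | e | v
      · exact absurd ⟨Sum.inl a, rfl⟩ hi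
      · exact absurd ⟨Sum.inr e, rfl⟩ hi
      · rfl
    have h2 : M2.rank ≤ 3 + cE := by
      rw [← hcard]
      apply rank_le_of_col_support M2 (Sum.map id Sum.inl) hginj
      intro i j hj
      have hj' : ∃ v, j = Sum.inr (Sum.inr v) := by
        rcases j with a | e | v
        · exact absurd ⟨Sum.inl a, rfl⟩ hj
        · exact absurd ⟨Sum.inr e, rfl⟩ hj
        · exact ⟨v, rfl⟩
      obtain ⟨v, rfl⟩ := hj'
      rcases i with a | e | w
      · rfl
      · rfl
      · exact hPPb x w v
    calc (Mx x).rank = (M1 + M2).rank := by rw [← hsplit]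
      _ ≤ M1.rank + M2.rank := matrix_rank_add_le _ _
      _ ≤ 2 * (3 + cE) := by omega
  -- lower bound data
  set x₀ : (GalbIdx d t) → ℝ := fun m =>
    match m with
    | Sum.inr (Sum.inr (n, k)) => if (k : ℕ) = (n : ℕ) then 1 else 0
    | _ => 0 with hx₀
  set ψ : ℕ → Fin d → ℝ :=
    fun m k => if ((k : ℕ) = m ∧ m < 2 * t + 2) then 1 else 0 with hψ
  have hφXP : ∀ (m : ℕ) (k : Fin d), φ x₀ (XP m k) = ψ m k := by
    intro m k
    by_cases hm : m < 2 * t + 2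
    · have h1 : XP m k = b (Sum.inr (Sum.inr (⟨m, hm⟩, k))) := hXP ⟨m, hm⟩ k
      rw [h1, hφb]
      simp [hx₀, hψ, hm]
    · rw [hXP0 m (by omega) k, map_zero, hψ]
      simp only []
      rw [if_neg (by omega)]
  have hgmn0 : ∀ i, gm i ≠ 0 := by
    intro i; rw [hgm]; split_ifs <;> norm_num
  have hgmsq : ∀ i, gm i * gm i = 1 := by
    intro i; rw [hgm]; split_ifs <;> norm_num
  have hgmpm : ∀ i, gm i = 1 ∨ gm i = -1 := by
    intro i; rw [hgm]; split_ifs <;> simp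
  -- blocks
  set eA := Equiv.sumAssoc (Fin 3) {pr : Fin d × Fin d // pr.1 < pr.2}
      (Fin (2 * t + 2) × Fin d) with heA
  set A₀ : Matrix (Fin 3 ⊕ {pr : Fin d × Fin d // pr.1 < pr.2})
      (Fin 3 ⊕ {pr : Fin d × Fin d // pr.1 < pr.2}) ℝ :=
    Matrix.of fun s s' => Mx x₀ (eA (Sum.inl s)) (eA (Sum.inl s')) with hA₀
  set B₀ : Matrix (Fin 3 ⊕ {pr : Fin d × Fin d // pr.1 < pr.2})
      (Fin (2 * t + 2) × Fin d) ℝ :=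
    Matrix.of fun s v => Mx x₀ (eA (Sum.inl s)) (eA (Sum.inr v)) with hB₀
  set C₀ : Matrix (Fin (2 * t + 2) × Fin d)
      (Fin 3 ⊕ {pr : Fin d × Fin d // pr.1 < pr.2}) ℝ :=
    Matrix.of fun v s => Mx x₀ (eA (Sum.inr v)) (eA (Sum.inl s)) with hC₀
  have hblocks : (Mx x₀).submatrix eA eA = Matrix.fromBlocks A₀ B₀ C₀ 0 := by
    ext i j
    rcases i with s | v <;> rcases j with s' | v'
    · simp [Matrix.submatrix_apply, hA₀]
    · simp [Matrix.submatrix_apply, hB₀]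
    · simp [Matrix.submatrix_apply, hC₀]
    · simp only [Matrix.submatrix_apply, Matrix.fromBlocks_apply₂₂, Matrix.zero_apply]
      exact hPPb x₀ v v'
  -- antisymmetry
  have hskew : ∀ i j : GalbIdx d t, Mx x₀ i j = - Mx x₀ j i := by
    intro i j
    rw [hMx, hMx, show ⁅b i, b j⁆ = -⁅b j, b i⁆ from (lie_skew _ _).symm, map_neg]
  have hBC : B₀ = - C₀ᵀ := by
    ext s v
    simp only [hB₀, hC₀, Matrix.neg_apply, Matrix.transpose_apply, Matrix.of_apply]
    exact hskew _ _
  -- entries of C₀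
  set coeff : Fin (2 * t + 2) → Fin d → {pr : Fin d × Fin d // pr.1 < pr.2} → ℝ :=
    fun n k e =>
      (if k = e.1.1 then gm e.1.1 else 0) * ψ (n : ℕ) e.1.2
      - (if k = e.1.2 then gm e.1.2 else 0) * ψ (n : ℕ) e.1.1 with hcoeff
  have hC₀e : ∀ (n : Fin (2 * t + 2)) (k : Fin d),
      (C₀ (n, k) (Sum.inl 0) = (n : ℝ) * ψ ((n : ℕ) - 1) k) ∧
      (C₀ (n, k) (Sum.inl 1) = -(((2 * t + 1 : ℝ)) - 2 * (n : ℕ)) * ψ (n : ℕ) k) ∧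
      (C₀ (n, k) (Sum.inl 2) = -(((2 * t + 1 : ℝ)) - (n : ℕ)) * ψ ((n : ℕ) + 1) k) ∧
      (∀ e, C₀ (n, k) (Sum.inr e) = - coeff n k e) := by
    intro n k
    have hn : (n : ℕ) ≤ 2 * t + 1 := by omega
    have hbP : b (Sum.inr (Sum.inr (n, k))) = XP (n : ℕ) k := (hXP n k).symm
    refine ⟨?_, ?_, ?_, ?_⟩
    · show Mx x₀ (Sum.inr (Sum.inr (n, k))) (Sum.inl 0) = _
      rw [hMx, hbP, ← hXH, show ⁅XP (n:ℕ) k, XH⁆ = -⁅XH, XP (n:ℕ) k⁆ from (lie_skew _ _).symm,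
        hH _ hn, map_neg, _root_.map_smul, hφXP]
      simp only [smul_eq_mul]; ring
    · show Mx x₀ (Sum.inr (Sum.inr (n, k))) (Sum.inl 1) = _
      rw [hMx, hbP, ← hXD, show ⁅XP (n:ℕ) k, XD⁆ = -⁅XD, XP (n:ℕ) k⁆ from (lie_skew _ _).symm,
        hD _ hn, map_neg, _root_.map_smul, hφXP]
      simp only [smul_eq_mul]; ring
    · show Mx x₀ (Sum.inr (Sum.inr (n, k))) (Sum.inl 2) = _
      rw [hMx, hbP, ← hXC, show ⁅XP (n:ℕ) k, XC⁆ = -⁅XC, XP (n:ℕ) k⁆ from (lie_skew _ _).symm,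
        hC _ hn, map_neg, _root_.map_smul, hφXP]
      simp only [smul_eq_mul]; ring
    · rintro ⟨⟨i, j⟩, hij⟩
      show Mx x₀ (Sum.inr (Sum.inr (n, k))) (Sum.inr (Sum.inl ⟨(i, j), hij⟩)) = _
      rw [hMx, hbP, ← hXE i j hij,
        show ⁅XP (n:ℕ) k, XE i j⁆ = -⁅XE i j, XP (n:ℕ) k⁆ from (lie_skew _ _).symm,
        hEP i j _ hn, map_neg, map_sub, _root_.map_smul, _root_.map_smul, hφXP, hφXP]
      simp only [hcoeff, smul_eq_mul]
  -- the master equation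
  have hEQ : ∀ u : (Fin 3 ⊕ {pr : Fin d × Fin d // pr.1 < pr.2}) → ℝ,
      C₀.mulVecLin u = 0 → ∀ (n : Fin (2 * t + 2)) (k : Fin d),
      (n : ℝ) * ψ ((n : ℕ) - 1) k * u (Sum.inl 0)
      - (((2 * t + 1 : ℝ)) - 2 * (n : ℕ)) * ψ (n : ℕ) k * u (Sum.inl 1)
      - (((2 * t + 1 : ℝ)) - (n : ℕ)) * ψ ((n : ℕ) + 1) k * u (Sum.inl 2)
      - (∑ e : {pr : Fin d × Fin d // pr.1 < pr.2}, coeff n k e * u (Sum.inr e)) = 0 := by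
    intro u hu n k
    have h0 := congrFun hu (n, k)
    simp only [Matrix.mulVecLin_apply, Matrix.mulVec, dotProduct,
      Pi.zero_apply] at h0
    rw [Fintype.sum_sum_type, Fin.sum_univ_three] at h0
    obtain ⟨e0, e1, e2, eE⟩ := hC₀e n k
    rw [e0, e1, e2] at h0
    have hEsum : ∑ e : {pr : Fin d × Fin d // pr.1 < pr.2}, C₀ (n, k) (Sum.inr e) * u (Sum.inr e)
        = -∑ e : {pr : Fin d × Fin d // pr.1 < pr.2}, coeff n k e * u (Sum.inr e) := by
      rw [← Finset.sum_neg_distrib]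
      exact Finset.sum_congr rfl (fun e _ => by rw [eE e]; ring)
    rw [hEsum] at h0
    linarith [h0]
  -- evaluation of the E-part sums
  have hEsum1 : ∀ (u : (Fin 3 ⊕ {pr : Fin d × Fin d // pr.1 < pr.2}) → ℝ)
      (n : Fin (2 * t + 2)) (k k' : Fin d) (hkk : k < k') (hval : (k' : ℕ) = (n : ℕ)),
      (∑ e : {pr : Fin d × Fin d // pr.1 < pr.2}, coeff n k e * u (Sum.inr e))
        = gm k * u (Sum.inr ⟨(k, k'), hkk⟩) := by
    intro u n k k' hkk hval
    rw [Finset.sum_eq_single_of_mem ⟨(k, k'), hkk⟩ (Finset.mem_univ _)]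
    · have h1 : ψ (n : ℕ) k' = 1 := by rw [hψ]; simp [hval]
      have h2 : ¬(k = k') := ne_of_lt hkk
      simp [hcoeff, h1, h2]
    · rintro ⟨⟨i, j⟩, hij⟩ _ hne
      have hij' : (i : ℕ) < (j : ℕ) := hij
      have hkk'' : (k : ℕ) < (k' : ℕ) := hkk
      have hnek : ¬(i = k ∧ j = k') := by
        rintro ⟨rfl, rfl⟩; exact hne rfl
      apply mul_eq_zero_of_left
      by_cases h1 : k = i
      · have h1v : (k : ℕ) = (i : ℕ) := congrArg Fin.val h1
        by_cases h2 : (j : ℕ) = (n : ℕ)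
        · exact absurd ⟨h1.symm, Fin.ext (by omega)⟩ hnek
        · have h3 : ¬(k = j) := by
            intro hkj
            have := congrArg Fin.val hkj
            omega
          simp [hcoeff, hψ, h2, h3, h1]
          intro _ hh
          exact absurd (congrArg Fin.val hh) (by omega)
      · by_cases h3 : k = j
        · have h3v : (k : ℕ) = (j : ℕ) := congrArg Fin.val h3
          have h4 : ¬((i : ℕ) = (n : ℕ)) := by
            intro h4
            have : i = k' := Fin.ext (by omega)
            rw [this] at hij'
            omega
          simp [hcoeff, hψ, h1, h4]
        · simp [hcoeff, h1, h3]
  have hEsum2 : ∀ (u : (Fin 3 ⊕ {pr : Fin d × Fin d // pr.1 < pr.2}) → ℝ)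
      (n : Fin (2 * t + 2)) (k k' : Fin d) (hkk : k' < k) (hval : (k' : ℕ) = (n : ℕ)),
      (∑ e : {pr : Fin d × Fin d // pr.1 < pr.2}, coeff n k e * u (Sum.inr e))
        = - (gm k * u (Sum.inr ⟨(k', k), hkk⟩)) := by
    intro u n k k' hkk hval
    rw [Finset.sum_eq_single_of_mem ⟨(k', k), hkk⟩ (Finset.mem_univ _)]
    · have h1 : ψ (n : ℕ) k' = 1 := by rw [hψ]; simp [hval]
      have h2 : ¬(k = k') := (ne_of_lt hkk).symm
      simp [hcoeff, h1, h2]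
    · rintro ⟨⟨i, j⟩, hij⟩ _ hne
      have hij' : (i : ℕ) < (j : ℕ) := hij
      have hkk'' : (k' : ℕ) < (k : ℕ) := hkk
      have hnek : ¬(i = k' ∧ j = k) := by
        rintro ⟨rfl, rfl⟩; exact hne rfl
      apply mul_eq_zero_of_left
      by_cases h1 : k = i
      · have h1v : (k : ℕ) = (i : ℕ) := congrArg Fin.val h1
        by_cases h2 : (j : ℕ) = (n : ℕ)
        · exfalso; omega
        · have h3 : ¬(k = j) := by
            intro hkj
            have := congrArg Fin.val hkj
            omega
          simp [hcoeff, hψ, h2, h3, h1]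
          intro _ hh
          exact absurd (congrArg Fin.val hh) (by omega)
      · by_cases h3 : k = j
        · have h3v : (k : ℕ) = (j : ℕ) := congrArg Fin.val h3
          by_cases h4 : (i : ℕ) = (n : ℕ)
          · exact absurd ⟨Fin.ext (by omega), Fin.ext (by omega)⟩ hnek
          · simp [hcoeff, hψ, h1, h4]
        · simp [hcoeff, h1, h3]
  have hEsum3 : ∀ (u : (Fin 3 ⊕ {pr : Fin d × Fin d // pr.1 < pr.2}) → ℝ)
      (n : Fin (2 * t + 2)) (k : Fin d) (hval : (k : ℕ) = (n : ℕ)),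
      (∑ e : {pr : Fin d × Fin d // pr.1 < pr.2}, coeff n k e * u (Sum.inr e)) = 0 := by
    intro u n k hval
    apply Finset.sum_eq_zero
    rintro ⟨⟨i, j⟩, hij⟩ _
    have hij' : (i : ℕ) < (j : ℕ) := hij
    apply mul_eq_zero_of_left
    by_cases h1 : k = i
    · have h1v : (k : ℕ) = (i : ℕ) := congrArg Fin.val h1
      have h2 : ¬((j : ℕ) = (n : ℕ)) := by omega
      have h3 : ¬(k = j) := by
        intro hkj; have := congrArg Fin.val hkj; omega
      simp [hcoeff, hψ, h1, h2, h3]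
      intro _ hh
      exact absurd (congrArg Fin.val hh) (by omega)
    · by_cases h3 : k = j
      · have h3v : (k : ℕ) = (j : ℕ) := congrArg Fin.val h3
        have h4 : ¬((i : ℕ) = (n : ℕ)) := by omega
        simp [hcoeff, hψ, h1, h3, h4]
        intro _ hh
        exact absurd (congrArg Fin.val hh) (by omega)
      · simp [hcoeff, h1, h3]
  -- injectivity of C₀
  have hCinj : Function.Injective C₀.mulVecLin := by
    rw [← LinearMap.ker_eq_bot, LinearMap.ker_eq_bot']
    intro u hu
    have ht' : (1 : ℝ) ≤ (t : ℝ) := by exact_mod_cast ht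
    obtain ⟨k0, hk0⟩ : ∃ k : Fin d, (k : ℕ) = 0 := ⟨⟨0, by omega⟩, rfl⟩
    obtain ⟨k1, hk1⟩ : ∃ k : Fin d, (k : ℕ) = 1 := ⟨⟨1, by omega⟩, rfl⟩
    obtain ⟨k2, hk2⟩ : ∃ k : Fin d, (k : ℕ) = 2 := ⟨⟨2, by omega⟩, rfl⟩
    obtain ⟨n0, hn0⟩ : ∃ n : Fin (2 * t + 2), (n : ℕ) = 0 := ⟨⟨0, by omega⟩, rfl⟩
    obtain ⟨n1, hn1⟩ : ∃ n : Fin (2 * t + 2), (n : ℕ) = 1 := ⟨⟨1, by omega⟩, rfl⟩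
    obtain ⟨n2, hn2⟩ : ∃ n : Fin (2 * t + 2), (n : ℕ) = 2 := ⟨⟨2, by omega⟩, rfl⟩
    have h01 : k0 < k1 := by rw [Fin.lt_def]; omega
    have h12 : k1 < k2 := by rw [Fin.lt_def]; omega
    -- equation (0,0) : u1 = 0
    have E00 := hEQ u hu n0 k0
    rw [hEsum3 u n0 k0 (by omega)] at E00
    simp only [hψ, hn0, hk0, Nat.cast_zero] at E00
    norm_num at E00
    -- equation (1,0)
    have E10 := hEQ u hu n1 k0
    rw [hEsum1 u n1 k0 k1 h01 (by omega)] at E10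
    simp only [hψ, hn1, hk0, hk1, Nat.cast_one] at E10
    norm_num at E10
    -- equation (0,1)
    have E01 := hEQ u hu n0 k1
    rw [hEsum2 u n0 k1 k0 h01 (by omega)] at E01
    simp only [hψ, hn0, hk0, hk1, Nat.cast_zero] at E01
    norm_num at E01
    -- equation (2,1)
    have E21 := hEQ u hu n2 k1
    rw [hEsum1 u n2 k1 k2 h12 (by omega)] at E21
    simp only [hψ, hn2, hk1, hk2, Nat.cast_ofNat] at E21
    norm_num at E21
    -- equation (1,2)
    have E12 := hEQ u hu n1 k2
    rw [hEsum2 u n1 k2 k1 h12 (by omega)] at E12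
    simp only [hψ, hn1, hk1, hk2, Nat.cast_one] at E12
    norm_num at E12
    rw [if_pos (show 0 < t by omega)] at E12
    have hu1 : u (Sum.inl 1) = 0 := by
      rcases E00 with h | h
      · exfalso; linarith
      · exact h
    have key : 2*(t:ℝ)*(u (Sum.inr ⟨(k0, k1), h01⟩))
        = 2*(2*(t:ℝ)+1)*(gm k0 * gm k2)*(u (Sum.inr ⟨(k0, k1), h01⟩)) := by
      linear_combination (2*(t:ℝ)*(gm k1))*E01 - (2*(t:ℝ)*(u (Sum.inr ⟨(k0, k1), h01⟩)))*hgmsq k1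
        - ((2*(t:ℝ)+1)*(gm k1))*E12 - ((2*(t:ℝ)+1)*(gm k2))*E21
        + (2*(2*(t:ℝ)+1)*(gm k2))*E10
    have hcases : gm k0 * gm k2 = 1 ∨ gm k0 * gm k2 = -1 := by
      rcases hgmpm k0 with h | h <;> rcases hgmpm k2 with h' | h' <;> rw [h, h'] <;> norm_num
    have ha0 : u (Sum.inr ⟨(k0, k1), h01⟩) = 0 := by
      rcases hcases with h | h <;> rw [h] at key
      · have h2 : (2*(t:ℝ)+2) * u (Sum.inr ⟨(k0, k1), h01⟩) = 0 := by linarith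
        rcases mul_eq_zero.mp h2 with h3 | h3
        · exfalso; linarith
        · exact h3
      · have h2 : (6*(t:ℝ)+2) * u (Sum.inr ⟨(k0, k1), h01⟩) = 0 := by linarith
        rcases mul_eq_zero.mp h2 with h3 | h3
        · exfalso; linarith
        · exact h3
    have hu0 : u (Sum.inl 0) = 0 := by rw [ha0] at E10; simpa using E10
    have hu2 : u (Sum.inl 2) = 0 := by
      rw [ha0] at E01
      have h2 : (2*(t:ℝ)+1) * u (Sum.inl 2) = 0 := by linarith
      rcases mul_eq_zero.mp h2 with h3 | h3
      · exfalso; linarith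
      · exact h3
    funext s
    rcases s with a3 | ⟨⟨i, j⟩, hij⟩
    · fin_cases a3
      · exact hu0
      · exact hu1
      · exact hu2
    · have hij' : (i : ℕ) < (j : ℕ) := hij
      have hjd : (j : ℕ) < d := j.isLt
      obtain ⟨ni, hni⟩ : ∃ n : Fin (2 * t + 2), (n : ℕ) = (i : ℕ) :=
        ⟨⟨(i : ℕ), by omega⟩, rfl⟩
      have EG := hEQ u hu ni j
      rw [hEsum2 u ni j i hij (by omega), hu0, hu1, hu2] at EG
      have h2 : gm j * u (Sum.inr ⟨(i, j), hij⟩) = 0 := by linarith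
      rcases mul_eq_zero.mp h2 with h3 | h3
      · exact absurd h3 (hgmn0 j)
      · exact h3
  -- rank of the blocks
  have hcardS : Fintype.card (Fin 3 ⊕ {pr : Fin d × Fin d // pr.1 < pr.2}) = 3 + cE := by
    simp [hcE]
  have hCrank : C₀.rank = 3 + cE := by rw [rank_eq_card_of_inj C₀ hCinj, hcardS]
  have hBrank : B₀.rank = 3 + cE := by rw [hBC, rank_neg, Matrix.rank_transpose, hCrank]
  have hlow : 2 * (3 + cE) ≤ (Mx x₀).rank := by
    rw [← Matrix.rank_submatrix (Mx x₀) eA eA, hblocks]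
    calc 2 * (3 + cE) = B₀.rank + C₀.rank := by rw [hBrank, hCrank]; ring
      _ ≤ _ := rank_fromBlocks_ge A₀ B₀ C₀
  have hrank₀ : (Mx x₀).rank = 2 * (3 + cE) := le_antisymm (hub x₀) hlow
  -- the supremum
  have hmem : 2 * (3 + cE) ∈ {r : ℕ | ∃ x : GalbIdx d t → ℝ,
      (Matrix.of fun i j : GalbIdx d t =>
        ∑ k, b.repr ⁅b i, b j⁆ k * x k).rank = r} := ⟨x₀, hrank₀⟩
  have hbd : ∀ r ∈ {r : ℕ | ∃ x : GalbIdx d t → ℝ,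
      (Matrix.of fun i j : GalbIdx d t =>
        ∑ k, b.repr ⁅b i, b j⁆ k * x k).rank = r}, r ≤ 2 * (3 + cE) := by
    rintro r ⟨x, rfl⟩
    exact hub x
  have hsup : sSup {r : ℕ | ∃ x : GalbIdx d t → ℝ,
      (Matrix.of fun i j : GalbIdx d t =>
        ∑ k, b.repr ⁅b i, b j⁆ k * x k).rank = r} = 2 * (3 + cE) :=
    le_antisymm (csSup_le ⟨_, hmem⟩ hbd) (le_csSup ⟨_, fun r hr => hbd r hr⟩ hmem)
  rw [hsup]
  -- dimension count
  have hfr : Module.finrank ℝ L = 3 + (cE + (2 * t + 2) * d) := by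
    rw [Module.finrank_eq_card_basis b]
    simp [hcE, GalbIdx]
  rw [hfr]
  -- final arithmetic
  have hc2 : 2 * cE = d * (d - 1) := by rw [hcE]; exact cardE_eq d
  have hcq : 2 * (cE : ℚ) = (d : ℚ) * ((d : ℚ) - 1) := by
    have hd1 : ((d - 1 : ℕ) : ℚ) = (d : ℚ) - 1 := by
      rw [Nat.cast_sub (le_trans (by norm_num : (1:ℕ) ≤ 3) hd), Nat.cast_one]
    calc 2 * (cE : ℚ) = ((2 * cE : ℕ) : ℚ) := by push_cast; ring
      _ = ((d * (d - 1) : ℕ) : ℚ) := by rw [hc2]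
      _ = (d : ℚ) * ((d : ℚ) - 1) := by rw [Nat.cast_mul, hd1]
  push_cast
  linear_combination (-(1/2 : ℚ)) * hcq
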